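/- Let G be a finite graph with loops at all vertices and let H = G - uv be obtained by deleting edge uv. Suppose f is an optimal opinion function for G (strictly majoritarian with f(V) = γ(G)) and f(u) = f(v) = -1. Then 0 ≤ γ(G) - γ(H) ≤ 2; in particular γ(H) ≤ γ(G). -/

import Mathlib

open scoped Classical
open Finset

/-- Sum of opinions over the closed neighborhood of `v` (closed since every
vertex has a loop, so `v` itself is counted). -/
noncomputable def nbrSum {V : Type*} [Fintype V] (G : SimpleGraph V) (f : V → ℤ) (v : V) : ℤ :=
  ∑ w ∈ univ.filter (fun w => G.Adj v w ∨ w = v), f w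

/-- `f` is an opinion function: every value is `1` or `-1`. -/
def IsOpinion {V : Type*} (f : V → ℤ) : Prop := ∀ v, f v = 1 ∨ f v = -1

/-- The set of vertices voting 'yes'. -/
noncomputable def yesVoters {V : Type*} [Fintype V] (G : SimpleGraph V) (f : V → ℤ) : Finset V :=
  univ.filter (fun v => 0 < nbrSum G f v)

/-- `f` is strictly majoritarian on `G`: more than `|V|/2` vertices vote 'yes'. -/
def Majoritarian {V : Type*} [Fintype V] (G : SimpleGraph V) (f : V → ℤ) : Prop :=
  Fintype.card V < 2 * (yesVoters G f).card

/-- The strict domination number: minimum of `f(V)` over strictly majoritarian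
opinion functions. -/
noncomputable def gamma {V : Type*} [Fintype V] (G : SimpleGraph V) : ℤ :=
  sInf {t : ℤ | ∃ f : V → ℤ, IsOpinion f ∧ Majoritarian G f ∧ t = ∑ v, f v}

section Aux

variable {V : Type*} [Fintype V]

lemma nbrSum_mono (G : SimpleGraph V) {f g : V → ℤ} (h : ∀ x, f x ≤ g x) (w : V) :
    nbrSum G f w ≤ nbrSum G g w :=
  Finset.sum_le_sum fun i _ => h i

lemma maj_of_le {G₁ G₂ : SimpleGraph V} {f g : V → ℤ}
    (h : ∀ w, nbrSum G₁ f w ≤ nbrSum G₂ g w) (hm : Majoritarian G₁ f) :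
    Majoritarian G₂ g := by
  have hsub : yesVoters G₁ f ⊆ yesVoters G₂ g := by
    intro w hw
    simp only [yesVoters, mem_filter, mem_univ, true_and] at hw ⊢
    exact lt_of_lt_of_le hw (h w)
  exact lt_of_lt_of_le hm (Nat.mul_le_mul_left 2 (card_le_card hsub))

lemma gammaSet_bddBelow (G : SimpleGraph V) :
    BddBelow {t : ℤ | ∃ f : V → ℤ, IsOpinion f ∧ Majoritarian G f ∧ t = ∑ v, f v} := by
  refine ⟨-(Fintype.card V : ℤ), ?_⟩
  rintro t ⟨f, hf, -, rfl⟩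
  have h1 : ∀ v ∈ (univ : Finset V), (-1 : ℤ) ≤ f v := fun v _ => by
    rcases hf v with h | h <;> simp [h]
  have h2 : ∑ _v : V, (-1 : ℤ) ≤ ∑ v, f v := Finset.sum_le_sum h1
  rw [Finset.sum_const, Finset.card_univ, nsmul_eq_mul, mul_neg_one] at h2
  exact h2

lemma gammaSet_nonempty [Nonempty V] (G : SimpleGraph V) :
    {t : ℤ | ∃ f : V → ℤ, IsOpinion f ∧ Majoritarian G f ∧ t = ∑ v, f v}.Nonempty := by
  refine ⟨∑ _v : V, (1 : ℤ), fun _ => (1 : ℤ), fun _ => Or.inl rfl, ?_, rfl⟩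
  have hyes : yesVoters G (fun _ => (1 : ℤ)) = univ := by
    ext w
    simp only [yesVoters, mem_filter, mem_univ, true_and, iff_true]
    unfold nbrSum
    rw [Finset.sum_const, nsmul_eq_mul, mul_one]
    exact_mod_cast Finset.card_pos.mpr ⟨w, by simp⟩
  unfold Majoritarian
  rw [hyes, Finset.card_univ]
  have : 0 < Fintype.card V := Fintype.card_pos
  omega

lemma gamma_le {G : SimpleGraph V} {f : V → ℤ} (hf : IsOpinion f) (hm : Majoritarian G f) :
    gamma G ≤ ∑ w, f w :=
  csInf_le (gammaSet_bddBelow G) ⟨f, hf, hm, rfl⟩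

lemma gamma_attained [Nonempty V] (G : SimpleGraph V) :
    ∃ g : V → ℤ, IsOpinion g ∧ Majoritarian G g ∧ gamma G = ∑ v, g v :=
  Int.csInf_mem (gammaSet_nonempty G) (gammaSet_bddBelow G)

/-- Relating closed-neighborhood sums before and after deleting the edge `uv`. -/
lemma nbrSum_delete (G : SimpleGraph V) {u v : V} (huv : u ≠ v) (hadj : G.Adj u v)
    (f : V → ℤ) (w : V) :
    nbrSum G f w =
      nbrSum (G.deleteEdges {s(u, v)}) f w +
        (if w = u then f v else if w = v then f u else 0) := by
  set H := G.deleteEdges {s(u, v)} with hH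
  have hAdj : ∀ a b : V, H.Adj a b ↔ G.Adj a b ∧ ¬(a = u ∧ b = v ∨ a = v ∧ b = u) := by
    intro a b
    rw [hH, SimpleGraph.deleteEdges_adj]
    simp [Sym2.eq_iff]
  by_cases hwu : w = u
  · have hset : univ.filter (fun x => G.Adj w x ∨ x = w) =
        insert v (univ.filter (fun x => H.Adj w x ∨ x = w)) := by
      ext x
      simp only [Finset.mem_insert, Finset.mem_filter, Finset.mem_univ, true_and]
      rw [hAdj]
      constructor
      · intro hx
        by_cases hxv : x = v
        · exact Or.inl hxv
        · rcases hx with hx | hx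
          · refine Or.inr (Or.inl ⟨hx, ?_⟩)
            rintro (⟨-, h1⟩ | ⟨h1, -⟩)
            · exact hxv h1
            · exact huv (hwu.symm.trans h1)
          · exact Or.inr (Or.inr hx)
      · rintro (rfl | ⟨h1, -⟩ | h)
        · exact Or.inl (hwu ▸ hadj)
        · exact Or.inl h1
        · exact Or.inr h
    have hvnot : v ∉ univ.filter (fun x => H.Adj w x ∨ x = w) := by
      intro hmem
      rw [Finset.mem_filter] at hmem
      rcases hmem.2 with h | h
      · rw [hAdj] at h
        exact h.2 (Or.inl ⟨hwu, rfl⟩)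
      · exact huv ((h.trans hwu).symm)
    rw [if_pos hwu]
    unfold nbrSum
    rw [hset, Finset.sum_insert hvnot]
    rw [add_comm _ (f v), add_right_inj]; exact Finset.sum_congr (by ext; simp) (fun _ _ => rfl)
  · by_cases hwv : w = v
    · have hset : univ.filter (fun x => G.Adj w x ∨ x = w) =
          insert u (univ.filter (fun x => H.Adj w x ∨ x = w)) := by
        ext x
        simp only [Finset.mem_insert, Finset.mem_filter, Finset.mem_univ, true_and]
        rw [hAdj]
        constructor
        · intro hx
          by_cases hxu : x = u
          · exact Or.inl hxu
          · rcases hx with hx | hx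
            · refine Or.inr (Or.inl ⟨hx, ?_⟩)
              rintro (⟨h1, -⟩ | ⟨-, h1⟩)
              · exact huv ((hwv.symm.trans h1).symm)
              · exact hxu h1
            · exact Or.inr (Or.inr hx)
        · rintro (rfl | ⟨h1, -⟩ | h)
          · exact Or.inl (hwv ▸ hadj.symm)
          · exact Or.inl h1
          · exact Or.inr h
      have hunot : u ∉ univ.filter (fun x => H.Adj w x ∨ x = w) := by
        intro hmem
        rw [Finset.mem_filter] at hmem
        rcases hmem.2 with h | h
        · rw [hAdj] at h
          exact h.2 (Or.inr ⟨hwv, rfl⟩)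
        · exact huv (h.trans hwv)
      rw [if_neg hwu, if_pos hwv]
      unfold nbrSum
      rw [hset, Finset.sum_insert hunot]
      rw [add_comm _ (f u), add_right_inj]; exact Finset.sum_congr (by ext; simp) (fun _ _ => rfl)
    · have hset : univ.filter (fun x => G.Adj w x ∨ x = w) =
          univ.filter (fun x => H.Adj w x ∨ x = w) := by
        ext x
        simp only [Finset.mem_filter, Finset.mem_univ, true_and]
        rw [hAdj]
        constructor
        · rintro (hx | hx)
          · refine Or.inl ⟨hx, ?_⟩
            rintro (⟨h1, -⟩ | ⟨h1, -⟩)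
            · exact hwu h1
            · exact hwv h1
          · exact Or.inr hx
        · rintro (⟨h1, -⟩ | h)
          · exact Or.inl h1
          · exact Or.inr h
      rw [if_neg hwu, if_neg hwv, add_zero]
      unfold nbrSum
      rw [hset]
      exact Finset.sum_congr (by ext; simp) (fun _ _ => rfl)

end Aux

theorem stmt2 {V : Type*} [Fintype V] [Nonempty V] (G : SimpleGraph V) (u v : V) (f : V → ℤ)
    (huv : u ≠ v) (hadj : G.Adj u v)
    (hf : IsOpinion f) (hmaj : Majoritarian G f) (hopt : ∑ w, f w = gamma G)
    (hu : f u = -1) (hv : f v = -1) :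
    0 ≤ gamma G - gamma (G.deleteEdges {s(u, v)}) ∧
      gamma G - gamma (G.deleteEdges {s(u, v)}) ≤ 2 ∧
      gamma (G.deleteEdges {s(u, v)}) ≤ gamma G := by
  set H := G.deleteEdges {s(u, v)} with hH
  -- Part 1: γ(H) ≤ γ(G).  `f` stays majoritarian on `H`.
  have hHle : gamma H ≤ gamma G := by
    have hmajH : Majoritarian H f := by
      refine maj_of_le (fun w => ?_) hmaj
      rw [nbrSum_delete G huv hadj f w, ← hH]
      split_ifs with h1 h2
      · rw [hv]; linarith
      · rw [hu]; linarith
      · linarith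
    calc gamma H ≤ ∑ w, f w := gamma_le hf hmajH
      _ = gamma G := hopt
  -- Part 2: γ(G) ≤ γ(H) + 2.
  obtain ⟨g, hg, hgmaj, hgsum⟩ := gamma_attained H
  have key : ∀ g' : V → ℤ, IsOpinion g' → (∀ x, g x ≤ g' x) →
      (1 ≤ nbrSum H g' u - nbrSum H g u + g' v) →
      (1 ≤ nbrSum H g' v - nbrSum H g v + g' u) →
      Majoritarian G g' := by
    intro g' hg' hmono hcu hcv
    refine maj_of_le (fun w => ?_) hgmaj
    rw [nbrSum_delete G huv hadj g' w, ← hH]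
    have hm := nbrSum_mono H hmono w
    split_ifs with h1 h2
    · subst h1; linarith
    · subst h2; linarith
    · linarith
  have habs : ∀ x, (-1 : ℤ) ≤ g x ∧ g x ≤ 1 := fun x => by
    rcases hg x with h | h <;> simp [h]
  have hGle : gamma G ≤ gamma H + 2 := by
    by_cases hgu : g u = -1
    · -- flip `u` to `+1`
      set g' : V → ℤ := Function.update g u 1 with hg'
      have hg'op : IsOpinion g' := fun x => by
        by_cases hx : x = u
        · subst hx; simp [hg']
        · simpa [hg', Function.update_of_ne hx] using hg x
      have hmono : ∀ x, g x ≤ g' x := fun x => by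
        by_cases hx : x = u
        · subst hx; simp [hg', hgu]
        · simp [hg', Function.update_of_ne hx]
      have hdiff : nbrSum H g' u - nbrSum H g u = 2 := by
        unfold nbrSum
        rw [← Finset.sum_sub_distrib, Finset.sum_eq_single u]
        · simp [hg', hgu]
        · intro b _ hb; simp [hg', Function.update_of_ne hb]
        · intro h; exact (h (by simp)).elim
      have hcu : 1 ≤ nbrSum H g' u - nbrSum H g u + g' v := by
        rw [hdiff]
        have hgv' : g' v = g v := by simp [hg', Function.update_of_ne (Ne.symm huv)]
        rw [hgv']; linarith [(habs v).1]
      have hcv : 1 ≤ nbrSum H g' v - nbrSum H g v + g' u := by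
        have h1 : nbrSum H g v ≤ nbrSum H g' v := nbrSum_mono H hmono v
        have hgu' : g' u = 1 := by simp [hg']
        rw [hgu']; linarith
      have hgsum' : ∑ x, g' x = (∑ x, g x) + 2 := by
        have hd : (∑ x, g' x) - (∑ x, g x) = 2 := by
          rw [← Finset.sum_sub_distrib, Finset.sum_eq_single u]
          · simp [hg', hgu]
          · intro b _ hb; simp [hg', Function.update_of_ne hb]
          · intro h; exact absurd (Finset.mem_univ u) h
        linarith
      calc gamma G ≤ ∑ x, g' x := gamma_le hg'op (key g' hg'op hmono hcu hcv)
        _ = (∑ x, g x) + 2 := hgsum'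
        _ = gamma H + 2 := by rw [hgsum]
    · have hgu1 : g u = 1 := (hg u).resolve_right hgu
      by_cases hgv : g v = -1
      · -- flip `v` to `+1`
        set g' : V → ℤ := Function.update g v 1 with hg'
        have hg'op : IsOpinion g' := fun x => by
          by_cases hx : x = v
          · subst hx; simp [hg']
          · simpa [hg', Function.update_of_ne hx] using hg x
        have hmono : ∀ x, g x ≤ g' x := fun x => by
          by_cases hx : x = v
          · subst hx; simp [hg', hgv]
          · simp [hg', Function.update_of_ne hx]
        have hdiff : nbrSum H g' v - nbrSum H g v = 2 := by
          unfold nbrSum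
          rw [← Finset.sum_sub_distrib, Finset.sum_eq_single v]
          · simp [hg', hgv]
          · intro b _ hb; simp [hg', Function.update_of_ne hb]
          · intro h; exact (h (by simp)).elim
        have hcv : 1 ≤ nbrSum H g' v - nbrSum H g v + g' u := by
          rw [hdiff]
          have hgu' : g' u = g u := by simp [hg', Function.update_of_ne huv]
          rw [hgu', hgu1]; linarith
        have hcu : 1 ≤ nbrSum H g' u - nbrSum H g u + g' v := by
          have h1 : nbrSum H g u ≤ nbrSum H g' u := nbrSum_mono H hmono u
          have hgv' : g' v = 1 := by simp [hg']
          rw [hgv']; linarith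
        have hgsum' : ∑ x, g' x = (∑ x, g x) + 2 := by
          have hd : (∑ x, g' x) - (∑ x, g x) = 2 := by
            rw [← Finset.sum_sub_distrib, Finset.sum_eq_single v]
            · simp [hg', hgv]
            · intro b _ hb; simp [hg', Function.update_of_ne hb]
            · intro h; exact absurd (Finset.mem_univ v) h
          linarith
        calc gamma G ≤ ∑ x, g' x := gamma_le hg'op (key g' hg'op hmono hcu hcv)
          _ = (∑ x, g x) + 2 := hgsum'
          _ = gamma H + 2 := by rw [hgsum]
      · have hgv1 : g v = 1 := (hg v).resolve_right hgv
        have hcu : 1 ≤ nbrSum H g u - nbrSum H g u + g v := by rw [hgv1]; linarith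
        have hcv : 1 ≤ nbrSum H g v - nbrSum H g v + g u := by rw [hgu1]; linarith
        have hmg : Majoritarian G g := key g hg (fun x => le_refl _) hcu hcv
        calc gamma G ≤ ∑ x, g x := gamma_le hg hmg
          _ = gamma H := hgsum.symm
          _ ≤ gamma H + 2 := by linarith
  exact ⟨by linarith, by linarith, hHle⟩
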